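/- Let m, n be positive integers, let V = Matrix (Fin m × Fin n) (Fin m × Fin n) ℂ, let T : V → V be the linear map T(v) = E(v) ⊗ₖ 1ₙ with E the normalized partial trace E(v) i j = (1/n) ∑ₖ v (i,k) (j,k), and for a ∈ V let Lₐ : V → V be left multiplication by a. Then the trace of the linear endomorphism Lₐ ∘ T of V equals (m/n)·trace(a), where trace(a) is the matrix trace of a. (Dividing both sides by dim V = (mn)² gives the type I instance of the Jones relation tr_{M₁}(e_N a) = [M:N]⁻¹ tr_M(a) with index [M:N] = n².) -/

import Mathlib

open Matrix Kronecker

lemma stdBasis_repr'_stmt17 (m n : ℕ) (M : Matrix (Fin m × Fin n) (Fin m × Fin n) ℂ)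
    (p : (Fin m × Fin n) × (Fin m × Fin n)) :
    (Matrix.stdBasis ℂ (Fin m × Fin n) (Fin m × Fin n)).repr M p = M p.1 p.2 := by
  simp [Matrix.stdBasis, Matrix.ofLinearEquiv]

/-- **The Jones trace relation (type I model).**
With `T(v) = E(v) ⊗ₖ 1ₙ` the Jones projection and `Lₐ` left multiplication by `a`,
the trace of the endomorphism `Lₐ ∘ T` of `V = Matrix (Fin m × Fin n) (Fin m × Fin n) ℂ`
equals `(m/n) · trace a`. -/
theorem stmt_17
    (m n : ℕ) (hm : 0 < m) (hn : 0 < n)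
    (E : Matrix (Fin m × Fin n) (Fin m × Fin n) ℂ → Matrix (Fin m) (Fin m) ℂ)
    (hE : ∀ (v : Matrix (Fin m × Fin n) (Fin m × Fin n) ℂ) (i j : Fin m),
      E v i j = (1 / (n : ℂ)) * ∑ k : Fin n, v (i, k) (j, k))
    (T : Module.End ℂ (Matrix (Fin m × Fin n) (Fin m × Fin n) ℂ))
    (hT : ∀ v : Matrix (Fin m × Fin n) (Fin m × Fin n) ℂ,
      T v = E v ⊗ₖ (1 : Matrix (Fin n) (Fin n) ℂ))
    (a : Matrix (Fin m × Fin n) (Fin m × Fin n) ℂ) :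
    LinearMap.trace ℂ (Matrix (Fin m × Fin n) (Fin m × Fin n) ℂ)
        ((LinearMap.mulLeft ℂ a :
          Module.End ℂ (Matrix (Fin m × Fin n) (Fin m × Fin n) ℂ)) ∘ₗ T) =
      ((m : ℂ) / (n : ℂ)) * a.trace := by
  classical
  set b := Matrix.stdBasis ℂ (Fin m × Fin n) (Fin m × Fin n)
  rw [LinearMap.trace_eq_matrix_trace ℂ b, Matrix.trace]
  have key : ∀ p : (Fin m × Fin n) × (Fin m × Fin n),
      (LinearMap.toMatrix b b ((LinearMap.mulLeft ℂ a) ∘ₗ T)) p p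
        = if p.1.2 = p.2.2 then (1 / (n:ℂ)) * a (p.1.1, p.1.2) (p.1.1, p.2.2) else 0 := by
    intro p
    obtain ⟨⟨i, α⟩, ⟨j, β⟩⟩ := p
    rw [LinearMap.toMatrix_apply, stdBasis_repr'_stmt17]
    simp only [LinearMap.comp_apply, LinearMap.mulLeft_apply, hT]
    have hb : b ((i,α),(j,β)) = single (i,α) (j,β) (1:ℂ) :=
      Matrix.stdBasis_eq_single ℂ _ _
    rw [hb]
    simp only [Matrix.mul_apply, Matrix.kroneckerMap_apply]
    rw [Fintype.sum_prod_type]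
    simp only [hE, Matrix.single, Matrix.one_apply, Prod.mk.injEq]
    simp [Finset.mul_sum, ite_and, Finset.sum_ite_eq, Finset.sum_ite_eq']
    by_cases h : α = β
    · simp [h]; ring
    · simp [h]
      intro hc
      exact absurd hc.symm h
  simp only [Matrix.diag]
  rw [Finset.sum_congr rfl fun p _ => key p]
  rw [Fintype.sum_prod_type]
  simp only [Fintype.sum_prod_type]
  simp [Finset.sum_ite_eq', Matrix.trace, Matrix.diag, Finset.mul_sum, Fintype.sum_prod_type]
  ring
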